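/- For the analytic-Korobov-kernel approximation problem, the problem is strongly polynomially tractable if and only if liminf_{k→∞} a_k/ln k > 0, and in that case the exponent of SPT is p* = 2/A_* with A_* = ln(ω^{-1}) · liminf_{k→∞} a_k/ln k. -/

import Mathlib

open Filter Real Set

/-- Information complexity: the number of multi-indices `(j₁,…,j_d) ∈ ℕ^d`
(here 0-indexed, so `Λ k j` stands for `λ(k+1, j+1)`) whose eigenvalue product exceeds `ε²`. -/
noncomputable def infoCount (Λ : ℕ → ℕ → ℝ) (d : ℕ) (ε : ℝ) : ℕ :=
  Nat.card {j : Fin d → ℕ | ε ^ 2 < ∏ k : Fin d, Λ k.val (j k)}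

/-- Strong polynomial tractability. -/
def IsSPT (Λ : ℕ → ℕ → ℝ) : Prop :=
  ∃ C p : ℝ, 0 ≤ C ∧ 0 ≤ p ∧ ∀ d : ℕ, 1 ≤ d → ∀ ε : ℝ, ε ∈ Set.Ioo (0 : ℝ) 1 →
    (infoCount Λ d ε : ℝ) ≤ C * ε ^ (-p)

/-- The exponent `p*` of strong polynomial tractability. -/
noncomputable def sptExponent (Λ : ℕ → ℕ → ℝ) : ℝ :=
  sInf {p : ℝ | 0 ≤ p ∧ ∃ C : ℝ, 0 ≤ C ∧ ∀ d : ℕ, 1 ≤ d → ∀ ε : ℝ, ε ∈ Set.Ioo (0 : ℝ) 1 →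
    (infoCount Λ d ε : ℝ) ≤ C * ε ^ (-p)}

/-- Polynomial tractability. -/
def IsPT (Λ : ℕ → ℕ → ℝ) : Prop :=
  ∃ C p q : ℝ, 0 ≤ C ∧ 0 ≤ p ∧ 0 ≤ q ∧ ∀ d : ℕ, 1 ≤ d → ∀ ε : ℝ, ε ∈ Set.Ioo (0 : ℝ) 1 →
    (infoCount Λ d ε : ℝ) ≤ C * (d : ℝ) ^ q * ε ^ (-p)

/-- Quasi-polynomial tractability. -/
def IsQPT (Λ : ℕ → ℕ → ℝ) : Prop :=
  ∃ C t : ℝ, 0 < C ∧ 0 < t ∧ ∀ d : ℕ, 1 ≤ d → ∀ ε : ℝ, ε ∈ Set.Ioo (0 : ℝ) 1 →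
    (infoCount Λ d ε : ℝ) ≤ C * Real.exp (t * (1 + Real.log d) * (1 + Real.log ε⁻¹))

/-- The exponent `t*` of quasi-polynomial tractability. -/
noncomputable def qptExponent (Λ : ℕ → ℕ → ℝ) : ℝ :=
  sInf {t : ℝ | 0 < t ∧ ∃ C : ℝ, 0 < C ∧ ∀ d : ℕ, 1 ≤ d → ∀ ε : ℝ, ε ∈ Set.Ioo (0 : ℝ) 1 →
    (infoCount Λ d ε : ℝ) ≤ C * Real.exp (t * (1 + Real.log d) * (1 + Real.log ε⁻¹))}

/-- The filter describing `ε⁻¹ + d → ∞` over pairs `(ε, d)` with `ε ∈ (0,1)` and `d ≥ 1`. -/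
noncomputable def wtFilter : Filter (ℝ × ℕ) :=
  (Filter.comap (fun p : ℝ × ℕ => p.1⁻¹ + (p.2 : ℝ)) Filter.atTop) ⊓
    Filter.principal {p : ℝ × ℕ | p.1 ∈ Set.Ioo (0 : ℝ) 1 ∧ 1 ≤ p.2}

/-- `(s,t)`-weak tractability: `ln n(ε,d) / (ε^{-s} + d^t) → 0` as `ε⁻¹ + d → ∞`. -/
def IsWT (Λ : ℕ → ℕ → ℝ) (s t : ℝ) : Prop :=
  Filter.Tendsto
    (fun p : ℝ × ℕ => Real.log (infoCount Λ p.2 p.1) / (p.1 ^ (-s) + (p.2 : ℝ) ^ t))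
    wtFilter (nhds 0)

/-- Uniform weak tractability. -/
def IsUWT (Λ : ℕ → ℕ → ℝ) : Prop := ∀ s t : ℝ, 0 < s → 0 < t → IsWT Λ s t

/-- The problem suffers from the curse of dimensionality. -/
def SuffersCurse (Λ : ℕ → ℕ → ℝ) : Prop :=
  ∃ C ε₀ α : ℝ, 0 < C ∧ 0 < ε₀ ∧ 0 < α ∧ ∀ ε : ℝ, 0 < ε → ε ≤ ε₀ →
    {d : ℕ | C * (1 + α) ^ d ≤ (infoCount Λ d ε : ℝ)}.Infinite

/-- Condition (3) of Property (P) for a given `τ > 0`: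
`H(k,τ) = ∑_{j≥2} (λ(k,j)/λ(k,2))^τ` is finite for each `k` and
`sup_k H(k,τ) = H(1,τ)` (equivalently `H(k,τ) ≤ H(1,τ)` for all `k`). -/
def Cond3 (Λ : ℕ → ℕ → ℝ) (τ : ℝ) : Prop :=
  0 < τ ∧ (∀ k, Summable fun j : ℕ => (Λ k (j + 1) / Λ k 1) ^ τ) ∧
    ∀ k, (∑' j : ℕ, (Λ k (j + 1) / Λ k 1) ^ τ) ≤ ∑' j : ℕ, (Λ 0 (j + 1) / Λ 0 1) ^ τ

/-- `τ₀`: the infimum of all `τ` satisfying Condition (3). -/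
noncomputable def tau0 (Λ : ℕ → ℕ → ℝ) : ℝ := sInf {τ : ℝ | Cond3 Λ τ}

/-- Property (P): each sequence `λ(k,·)` is nonincreasing and nonnegative with `λ(k,1) = 1`
and `λ(k,2) > 0`, `h_k = λ(k,2)` is nonincreasing, and Condition (3) holds for some `τ > 0`. -/
structure PropertyP (Λ : ℕ → ℕ → ℝ) : Prop where
  nonneg : ∀ k j, 0 ≤ Λ k j
  anti : ∀ k, Antitone (Λ k)
  first : ∀ k, Λ k 0 = 1
  second_pos : ∀ k, 0 < Λ k 1
  h_anti : Antitone fun k => Λ k 1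
  cond3 : ∃ τ : ℝ, Cond3 Λ τ

/-- Eigenvalues of the analytic-Korobov-kernel problem: `λ(k,1) = 1` and
`λ(k,2j) = λ(k,2j+1) = ω^{a_k j^{b_k}}` for `j ≥ 1`
(0-indexed in both variables: `akorobovLam ω a b k j = λ(k+1, j+1)`). -/
noncomputable def akorobovLam (ω : ℝ) (a b : ℕ → ℝ) (k j : ℕ) : ℝ :=
  if j = 0 then 1 else ω ^ (a k * (((j + 1) / 2 : ℕ) : ℝ) ^ (b k))

section AKorobovAux

section Base
variable {ω : ℝ} (hω : ω ∈ Set.Ioo (0 : ℝ) 1) {a b : ℕ → ℝ}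
  (ha0 : 0 < a 0) (hamono : Monotone a) {bstar : ℝ} (hbs : 0 < bstar) (hb : ∀ k, bstar ≤ b k)

lemma lam_zero (k : ℕ) : akorobovLam ω a b k 0 = 1 := rfl

lemma lam_succ (k j : ℕ) :
    akorobovLam ω a b k (j + 1) = ω ^ (a k * ((j / 2 + 1 : ℕ) : ℝ) ^ (b k)) := by
  have h : (j + 1 + 1) / 2 = j / 2 + 1 := by omega
  simp only [akorobovLam, if_neg (Nat.succ_ne_zero j), h]

include ha0 hamono in
lemma ha_pos (k : ℕ) : 0 < a k := lt_of_lt_of_le ha0 (hamono (Nat.zero_le k))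

include hω in
lemma lam_pos (k j : ℕ) : 0 < akorobovLam ω a b k j := by
  unfold akorobovLam; split
  · norm_num
  · exact rpow_pos_of_pos hω.1 _

include hω ha0 hamono in
lemma lam_le_one (k j : ℕ) : akorobovLam ω a b k j ≤ 1 := by
  unfold akorobovLam; split
  · exact le_rfl
  · apply rpow_le_one hω.1.le hω.2.le
    have := ha_pos ha0 hamono k
    positivity

-- each λ(k,·) tends to 0
include hω ha0 hamono hbs hb in
lemma lam_tendsto (k : ℕ) : Tendsto (akorobovLam ω a b k) atTop (nhds 0) := by
  have hak := ha_pos ha0 hamono k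
  have hbk : 0 < b k := lt_of_lt_of_le hbs (hb k)
  have h1 : Tendsto (fun j : ℕ => (((j + 1) / 2 : ℕ) : ℝ)) atTop atTop := by
    apply tendsto_natCast_atTop_atTop.comp
    apply tendsto_atTop_atTop_of_monotone
    · intro x y hxy; exact Nat.div_le_div_right (Nat.add_le_add_right hxy 1)
    · intro n; exact ⟨2 * n, by omega⟩
  have h2 : Tendsto (fun j : ℕ => a k * (((j + 1) / 2 : ℕ) : ℝ) ^ (b k)) atTop atTop :=
    ((tendsto_rpow_atTop hbk).comp h1).const_mul_atTop hak
  have h3 : Tendsto (fun j : ℕ => ω ^ (a k * (((j + 1) / 2 : ℕ) : ℝ) ^ (b k))) atTop (nhds 0) := by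
    have : ∀ j : ℕ, ω ^ (a k * (((j + 1) / 2 : ℕ) : ℝ) ^ (b k))
        = Real.exp (Real.log ω * (a k * (((j + 1) / 2 : ℕ) : ℝ) ^ (b k))) := fun j =>
      Real.rpow_def_of_pos hω.1 _
    simp only [this]
    apply Real.tendsto_exp_atBot.comp
    have hlog : Real.log ω < 0 := Real.log_neg hω.1 hω.2
    exact Tendsto.const_mul_atTop_of_neg hlog h2
  have : ∀ᶠ j : ℕ in atTop, ω ^ (a k * (((j + 1) / 2 : ℕ) : ℝ) ^ (b k)) = akorobovLam ω a b k j := by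
    filter_upwards [eventually_ge_atTop 1] with j hj
    rw [akorobovLam, if_neg (by omega)]
  exact h3.congr' this

end Base

-- generic: ∑ exp(-(c m^s)) < ∞ for c,s>0
lemma exp_rpow_summable {c s : ℝ} (hc : 0 < c) (hs : 0 < s) :
    Summable (fun m : ℕ => Real.exp (-(c * (m : ℝ) ^ s))) := by
  have htend : Tendsto (fun m : ℕ => ((m : ℝ) ^ s) ^ (2 / s) * Real.exp (-c * (m : ℝ) ^ s))
      atTop (nhds 0) := by
    apply (tendsto_rpow_mul_exp_neg_mul_atTop_nhds_zero (2 / s) c hc).comp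
    exact (tendsto_rpow_atTop hs).comp tendsto_natCast_atTop_atTop
  have heq : ∀ᶠ m : ℕ in atTop, ((m : ℝ) ^ s) ^ (2 / s) * Real.exp (-c * (m : ℝ) ^ s)
      = (m : ℝ) ^ (2 : ℝ) * Real.exp (-(c * (m : ℝ) ^ s)) := by
    filter_upwards [eventually_ge_atTop 1] with m hm
    have hm0 : (0 : ℝ) ≤ (m : ℝ) := Nat.cast_nonneg m
    rw [← Real.rpow_mul hm0, mul_div_cancel₀ _ (ne_of_gt hs)]
    ring_nf
  have htend2 : Tendsto (fun m : ℕ => (m : ℝ) ^ (2 : ℝ) * Real.exp (-(c * (m : ℝ) ^ s)))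
      atTop (nhds 0) := htend.congr' heq
  have hbound : ∀ᶠ m : ℕ in atTop, ‖Real.exp (-(c * (m : ℝ) ^ s))‖ ≤ 1 * ‖(m : ℝ) ^ (-2 : ℝ)‖ := by
    filter_upwards [htend2.eventually (eventually_le_nhds one_pos), eventually_ge_atTop 1]
      with m h1 hm
    have hmpos : (0 : ℝ) < (m : ℝ) := by exact_mod_cast Nat.pos_of_ne_zero (by omega)
    rw [one_mul, Real.norm_eq_abs, Real.norm_eq_abs, abs_of_pos (Real.exp_pos _),
      abs_of_pos (Real.rpow_pos_of_pos hmpos _), Real.rpow_neg hmpos.le]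
    rw [inv_eq_one_div, le_div_iff₀ (Real.rpow_pos_of_pos hmpos _), mul_comm]
    exact h1
  exact summable_of_isBigO_nat (Real.summable_nat_rpow.mpr (by norm_num))
    (Asymptotics.isBigO_iff.mpr ⟨1, hbound⟩)

lemma u_summable {ω c s : ℝ} (hω0 : 0 < ω) (hω1 : ω < 1) (hc : 0 < c) (hs : 0 < s) :
    Summable (fun m : ℕ => ω ^ (c * ((((m + 1) : ℕ) : ℝ) ^ s - 1))) := by
  set L : ℝ := -Real.log ω with hL
  have hLpos : 0 < L := by
    simp only [hL, neg_pos]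
    exact Real.log_neg hω0 hω1
  have hbnd : ∀ m : ℕ, ω ^ (c * ((((m + 1) : ℕ) : ℝ) ^ s - 1))
      ≤ Real.exp (c * L) * Real.exp (-(c * L * (m : ℝ) ^ s)) := by
    intro m
    rw [Real.rpow_def_of_pos hω0, ← Real.exp_add]
    apply Real.exp_le_exp.mpr
    have hcast : (((m + 1) : ℕ) : ℝ) = (m : ℝ) + 1 := by push_cast; ring
    have hpow : (m : ℝ) ^ s ≤ ((m : ℝ) + 1) ^ s :=
      Real.rpow_le_rpow (Nat.cast_nonneg m) (by linarith) hs.le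
    have hlogω : Real.log ω = -L := by rw [hL]; ring
    rw [hlogω, hcast]
    nlinarith [mul_le_mul_of_nonneg_left hpow (le_of_lt (mul_pos hc hLpos))]
  have hsum : Summable (fun m : ℕ => Real.exp (c * L) * Real.exp (-(c * L * (m : ℝ) ^ s))) := by
    have := exp_rpow_summable (mul_pos hc hLpos) hs
    exact this.mul_left _
  exact hsum.of_nonneg_of_le
    (fun m => Real.rpow_nonneg hω0.le _) hbnd

lemma v_summable {ω τ α : ℝ} (hω0 : 0 < ω) (hω1 : ω < 1) (hτ : 0 < τ) (hα : 0 < α)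
    {a : ℕ → ℝ} (hr : 1 < τ * α * (-Real.log ω))
    (hev : ∀ᶠ k : ℕ in atTop, α * Real.log ((k : ℝ) + 1) ≤ a k) :
    Summable (fun k : ℕ => ω ^ (τ * a k)) := by
  set r : ℝ := τ * α * (-Real.log ω) with hrdef
  have hg : Summable (fun k : ℕ => ((k : ℝ) + 1) ^ (-r)) := by
    have h1 : Summable (fun k : ℕ => (k : ℝ) ^ (-r)) :=
      Real.summable_nat_rpow.mpr (by linarith)
    have h2 := (summable_nat_add_iff 1).mpr h1
    apply h2.congr
    intro n; push_cast; ring_nf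
  apply summable_of_isBigO_nat hg
  rw [Asymptotics.isBigO_iff]
  refine ⟨1, ?_⟩
  filter_upwards [hev, eventually_ge_atTop 1] with k hk hk1
  have hk1R : (1 : ℝ) ≤ (k : ℝ) + 1 := by have := Nat.cast_nonneg (α := ℝ) k; linarith
  have hlog : 0 ≤ Real.log ((k : ℝ) + 1) := Real.log_nonneg hk1R
  have hb : ω ^ (τ * a k) ≤ ((k : ℝ) + 1) ^ (-r) := by
    rw [Real.rpow_def_of_pos hω0, Real.rpow_def_of_pos (by linarith : (0:ℝ) < (k:ℝ)+1)]
    apply Real.exp_le_exp.mpr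
    have hlogω : Real.log ω < 0 := Real.log_neg hω0 hω1
    have h1 : τ * (α * Real.log ((k : ℝ) + 1)) ≤ τ * a k := by
      apply mul_le_mul_of_nonneg_left hk hτ.le
    calc Real.log ω * (τ * a k) ≤ Real.log ω * (τ * (α * Real.log ((k : ℝ) + 1))) := by
          nlinarith
      _ = Real.log ((k : ℝ) + 1) * -r := by rw [hrdef]; ring
  rw [Real.norm_eq_abs, Real.norm_eq_abs, one_mul,
    abs_of_pos (Real.rpow_pos_of_pos hω0 _), abs_of_pos (Real.rpow_pos_of_pos (by linarith) _)]
  exact hb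

lemma sum_half_pair (f : ℕ → ℝ) (M : ℕ) :
    ∑ j ∈ Finset.range (2 * M), f (j / 2) = 2 * ∑ m ∈ Finset.range M, f m := by
  induction M with
  | zero => simp
  | succ M ih =>
    have h2 : 2 * (M + 1) = (2 * M + 1) + 1 := by ring
    rw [h2, Finset.sum_range_succ, Finset.sum_range_succ, ih, Finset.sum_range_succ]
    have e1 : (2 * M + 1) / 2 = M := by omega
    have e2 : (2 * M) / 2 = M := by omega
    rw [e1, e2]; ring

lemma sum_half_le (f : ℕ → ℝ) (hf : ∀ m, 0 ≤ f m) (N : ℕ) :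
    ∑ j ∈ Finset.range N, f (j / 2) ≤ 2 * ∑ m ∈ Finset.range N, f m := by
  rw [← sum_half_pair]
  apply Finset.sum_le_sum_of_subset_of_nonneg
  · apply Finset.range_subset_range.mpr; omega
  · intro i _ _; exact hf _


section Upper
variable {ω : ℝ} (hω : ω ∈ Set.Ioo (0 : ℝ) 1) {a b : ℕ → ℝ}
  (ha0 : 0 < a 0) (hamono : Monotone a) {bstar : ℝ} (hbs : 0 < bstar) (hb : ∀ k, bstar ≤ b k)

include hω ha0 hamono in
lemma prod_coord {d : ℕ} (j : Fin d → ℕ) (k : Fin d) :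
    ∏ i : Fin d, akorobovLam ω a b i.val (j i) ≤ akorobovLam ω a b k.val (j k) := by
  rw [← Finset.mul_prod_erase Finset.univ _ (Finset.mem_univ k)]
  have h1 : ∏ i ∈ Finset.univ.erase k, akorobovLam ω a b i.val (j i) ≤ 1 :=
    Finset.prod_le_one (fun i _ => (lam_pos hω _ _).le)
      (fun i _ => lam_le_one hω ha0 hamono _ _)
  exact mul_le_of_le_one_right (lam_pos hω _ _).le h1

include hω ha0 hamono hbs hb in
lemma S_finite (d : ℕ) {ε : ℝ} (hε : 0 < ε) :
    {j : Fin d → ℕ | ε ^ 2 < ∏ k : Fin d, akorobovLam ω a b k.val (j k)}.Finite := by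
  have hcoord : ∀ k : Fin d, {j : ℕ | ε ^ 2 < akorobovLam ω a b k.val j}.Finite := by
    intro k
    have hev : ∀ᶠ j : ℕ in atTop, akorobovLam ω a b k.val j < ε ^ 2 :=
      (lam_tendsto hω ha0 hamono hbs hb k.val).eventually_lt_const (by positivity)
    obtain ⟨N, hN⟩ := eventually_atTop.mp hev
    apply (Set.finite_Iio N).subset
    intro j hj
    simp only [Set.mem_setOf_eq] at hj
    by_contra hjN
    exact absurd (hN j (not_lt.mp (by simpa using hjN))) (not_lt.mpr hj.le)
  apply (Set.Finite.pi (fun k => hcoord k)).subset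
  intro j hj
  simp only [Set.mem_setOf_eq] at hj
  intro k _
  exact lt_of_lt_of_le hj (prod_coord hω ha0 hamono j k)

include hω ha0 hamono hbs hb in
set_option maxHeartbeats 800000 in
lemma count_upper {τ α : ℝ} (hτ : 0 < τ) (hα : 0 < α) (hr : 1 < τ * α * (-Real.log ω))
    (hev : ∀ᶠ k : ℕ in atTop, α * Real.log ((k : ℝ) + 1) ≤ a k) :
    ∃ C : ℝ, 0 ≤ C ∧ ∀ d : ℕ, 1 ≤ d → ∀ ε : ℝ, ε ∈ Set.Ioo (0 : ℝ) 1 →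
      (infoCount (akorobovLam ω a b) d ε : ℝ) ≤ C * ε ^ (-(2 * τ)) := by
  set u : ℕ → ℝ := fun m => ω ^ ((τ * a 0) * ((((m + 1) : ℕ) : ℝ) ^ bstar - 1)) with hu
  have husum : Summable u := u_summable hω.1 hω.2 (mul_pos hτ ha0) hbs
  set U : ℝ := ∑' m, u m with hU
  have hunneg : ∀ m, 0 ≤ u m := fun m => (Real.rpow_pos_of_pos hω.1 _).le
  have hUnneg : 0 ≤ U := tsum_nonneg hunneg
  set v : ℕ → ℝ := fun k => ω ^ (τ * a k) with hv
  have hvsum : Summable v := v_summable hω.1 hω.2 hτ hα hr hev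
  set V : ℝ := ∑' k, v k with hV
  have hvnneg : ∀ k, 0 ≤ v k := fun k => (Real.rpow_pos_of_pos hω.1 _).le
  set C : ℝ := Real.exp (2 * U * V) with hC
  -- per-coordinate block estimate
  have block : ∀ k N, ∑ j ∈ Finset.range N, (akorobovLam ω a b k j) ^ τ
      ≤ 1 + 2 * U * v k := by
    intro k N
    have hstep : ∀ j : ℕ, (akorobovLam ω a b k (j + 1)) ^ τ ≤ v k * u (j / 2) := by
      intro j
      rw [lam_succ]
      set M : ℝ := ((j / 2 + 1 : ℕ) : ℝ) with hM
      have hM1 : (1 : ℝ) ≤ M := by rw [hM]; exact_mod_cast Nat.le_add_left 1 _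
      have hMb : M ^ bstar ≤ M ^ (b k) :=
        Real.rpow_le_rpow_of_exponent_le hM1 (hb k)
      have hM1b : (1 : ℝ) ≤ M ^ bstar := Real.one_le_rpow hM1 hbs.le
      have hak : a 0 ≤ a k := hamono (Nat.zero_le k)
      have hexp : τ * a k + (τ * a 0) * (M ^ bstar - 1) ≤ (a k * M ^ (b k)) * τ := by
        nlinarith [mul_le_mul hak (sub_le_sub_right hMb 1) (by linarith) (ha_pos ha0 hamono k).le]
      have h1 : (ω ^ (a k * M ^ (b k))) ^ τ = ω ^ ((a k * M ^ (b k)) * τ) := by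
        rw [← Real.rpow_mul hω.1.le]
      rw [h1]
      have h2 : v k * u (j / 2) = ω ^ (τ * a k + (τ * a 0) * (M ^ bstar - 1)) := by
        rw [hv, hu, ← Real.rpow_add hω.1]
      rw [h2]
      exact Real.rpow_le_rpow_of_exponent_ge hω.1 hω.2.le hexp
    calc ∑ j ∈ Finset.range N, (akorobovLam ω a b k j) ^ τ
        ≤ ∑ j ∈ Finset.range (N + 1), (akorobovLam ω a b k j) ^ τ := by
          apply Finset.sum_le_sum_of_subset_of_nonneg (by simp)
          intro i _ _
          exact Real.rpow_nonneg (lam_pos hω k i).le _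
      _ = ∑ j ∈ Finset.range N, (akorobovLam ω a b k (j + 1)) ^ τ + (akorobovLam ω a b k 0) ^ τ :=
          Finset.sum_range_succ' _ N
      _ ≤ v k * ∑ j ∈ Finset.range N, u (j / 2) + 1 := by
          rw [lam_zero, Real.one_rpow]
          gcongr
          calc ∑ j ∈ Finset.range N, (akorobovLam ω a b k (j + 1)) ^ τ
              ≤ ∑ j ∈ Finset.range N, v k * u (j / 2) := Finset.sum_le_sum fun j _ => hstep j
            _ = v k * ∑ j ∈ Finset.range N, u (j / 2) := by rw [Finset.mul_sum]
      _ ≤ v k * (2 * U) + 1 := by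
          gcongr
          · exact hvnneg k
          · calc ∑ j ∈ Finset.range N, u (j / 2) ≤ 2 * ∑ m ∈ Finset.range N, u m :=
                sum_half_le u hunneg N
              _ ≤ 2 * U := by
                  have := husum.sum_le_tsum (Finset.range N) (fun m _ => hunneg m)
                  linarith
      _ = 1 + 2 * U * v k := by ring
  refine ⟨C, (Real.exp_pos _).le, ?_⟩
  intro d hd ε hε
  have hSfin := S_finite hω ha0 hamono hbs hb d hε.1
  -- choose per-coordinate cutoffs
  have hN : ∀ k : Fin d, ∃ N : ℕ, ∀ j, N ≤ j → akorobovLam ω a b k.val j < ε ^ 2 := by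
    intro k
    exact eventually_atTop.mp
      ((lam_tendsto hω ha0 hamono hbs hb k.val).eventually_lt_const (pow_pos hε.1 2))
  choose N hNspec using hN
  have hsub : hSfin.toFinset ⊆ Fintype.piFinset (fun k => Finset.range (N k)) := by
    intro j hj
    rw [Set.Finite.mem_toFinset] at hj
    rw [Fintype.mem_piFinset]
    intro k
    rw [Finset.mem_range]
    by_contra hge
    have h1 := hNspec k (j k) (not_lt.mp hge)
    have h2 : ε ^ 2 < akorobovLam ω a b k.val (j k) :=
      lt_of_lt_of_le hj (prod_coord hω ha0 hamono j k)
    linarith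
  have hkey : (hSfin.toFinset.card : ℝ) * (ε ^ 2) ^ τ ≤ C := by
    calc (hSfin.toFinset.card : ℝ) * (ε ^ 2) ^ τ
        = ∑ _j ∈ hSfin.toFinset, (ε ^ 2) ^ τ := by
          rw [Finset.sum_const, nsmul_eq_mul]
      _ ≤ ∑ j ∈ hSfin.toFinset, ∏ k : Fin d, (akorobovLam ω a b k.val (j k)) ^ τ := by
          apply Finset.sum_le_sum
          intro j hj
          rw [Set.Finite.mem_toFinset] at hj
          calc (ε ^ 2) ^ τ ≤ (∏ k : Fin d, akorobovLam ω a b k.val (j k)) ^ τ :=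
              Real.rpow_le_rpow (by positivity) hj.le hτ.le
            _ = ∏ k : Fin d, (akorobovLam ω a b k.val (j k)) ^ τ :=
              (Real.finset_prod_rpow _ _ (fun k _ => (lam_pos hω _ _).le) _).symm
      _ ≤ ∑ j ∈ Fintype.piFinset (fun k => Finset.range (N k)),
            ∏ k : Fin d, (akorobovLam ω a b k.val (j k)) ^ τ := by
          apply Finset.sum_le_sum_of_subset_of_nonneg hsub
          intro j _ _
          exact Finset.prod_nonneg fun k _ => Real.rpow_nonneg (lam_pos hω _ _).le _
      _ = ∏ k : Fin d, ∑ j ∈ Finset.range (N k), (akorobovLam ω a b k.val j) ^ τ :=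
          (Finset.prod_univ_sum (fun k => Finset.range (N k))
            (fun k j => (akorobovLam ω a b k.val j) ^ τ)).symm
      _ ≤ ∏ k : Fin d, Real.exp (2 * U * v k.val) := by
          apply Finset.prod_le_prod
          · intro k _
            apply Finset.sum_nonneg fun j _ => Real.rpow_nonneg (lam_pos hω _ _).le _
          · intro k _
            calc ∑ j ∈ Finset.range (N k), (akorobovLam ω a b k.val j) ^ τ
                ≤ 1 + 2 * U * v k.val := block k.val (N k)
              _ ≤ Real.exp (2 * U * v k.val) := by
                  have := Real.add_one_le_exp (2 * U * v k.val)
                  linarith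
      _ = Real.exp (∑ k : Fin d, 2 * U * v k.val) := by rw [Real.exp_sum]
      _ ≤ C := by
          rw [hC]
          apply Real.exp_le_exp.mpr
          have h1 : ∑ k : Fin d, 2 * U * v k.val = 2 * U * ∑ k ∈ Finset.range d, v k := by
            rw [← Finset.mul_sum, Finset.sum_range fun k => v k]
          rw [h1]
          have h2 : ∑ k ∈ Finset.range d, v k ≤ V :=
            hvsum.sum_le_tsum (Finset.range d) (fun m _ => hvnneg m)
          nlinarith
  have hcard : (infoCount (akorobovLam ω a b) d ε : ℝ) = (hSfin.toFinset.card : ℝ) := by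
    rw [infoCount, Nat.card_eq_card_finite_toFinset hSfin]
  have hεp : (0 : ℝ) < (ε ^ 2) ^ τ := Real.rpow_pos_of_pos (pow_pos hε.1 2) _
  have heq : ε ^ (-(2 * τ)) = ((ε ^ 2) ^ τ)⁻¹ := by
    rw [← Real.rpow_natCast ε 2, ← Real.rpow_mul hε.1.le, ← Real.rpow_neg hε.1.le]
    norm_num
  calc (infoCount (akorobovLam ω a b) d ε : ℝ)
      = (hSfin.toFinset.card : ℝ) := hcard
    _ ≤ C / (ε ^ 2) ^ τ := (le_div_iff₀ hεp).mpr hkey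
    _ = C * ε ^ (-(2 * τ)) := by rw [heq, div_eq_mul_inv]

end Upper

section Lower
variable {ω : ℝ} (hω : ω ∈ Set.Ioo (0 : ℝ) 1) {a b : ℕ → ℝ}
  (ha0 : 0 < a 0) (hamono : Monotone a) {bstar : ℝ} (hbs : 0 < bstar) (hb : ∀ k, bstar ≤ b k)

include hω ha0 hamono hbs hb in
lemma count_lower_step {C p : ℝ}
    (hbound : ∀ d : ℕ, 1 ≤ d → ∀ ε : ℝ, ε ∈ Set.Ioo (0 : ℝ) 1 →
      (infoCount (akorobovLam ω a b) d ε : ℝ) ≤ C * ε ^ (-p))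
    (d : ℕ) (hd : 1 ≤ d) {ε : ℝ} (hε : ε ∈ Set.Ioo (0 : ℝ) 1)
    (hsmall : ε ^ 2 < ω ^ (a (d - 1))) :
    (2 * d : ℝ) ≤ C * ε ^ (-p) := by
  set S := {j : Fin d → ℕ | ε ^ 2 < ∏ k : Fin d, akorobovLam ω a b k.val (j k)} with hS
  have hSfin : S.Finite := S_finite hω ha0 hamono hbs hb d hε.1
  haveI := hSfin.to_subtype
  -- the injection
  set f : Fin d × Fin 2 → (Fin d → ℕ) :=
    fun q => fun k' => if k' = q.1 then q.2.val + 1 else 0 with hf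
  have hmem : ∀ q : Fin d × Fin 2, f q ∈ S := by
    rintro ⟨k, i⟩
    have hprod : ∏ k' : Fin d, akorobovLam ω a b k'.val (f (k, i) k')
        = akorobovLam ω a b k.val (i.val + 1) := by
      rw [Finset.prod_eq_single k
        (fun k' _ hk' => by simp only [hf, if_neg hk']; exact lam_zero k'.val)
        (fun hk => absurd (Finset.mem_univ k) hk)]
      simp [hf]
    have hval : akorobovLam ω a b k.val (i.val + 1) = ω ^ (a k.val) := by
      rw [lam_succ]
      have h2 : i.val / 2 + 1 = 1 := by omega
      rw [h2]
      norm_num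
    simp only [hS, Set.mem_setOf_eq, hprod, hval]
    have hle : a k.val ≤ a (d - 1) := hamono (by omega)
    calc ε ^ 2 < ω ^ (a (d - 1)) := hsmall
      _ ≤ ω ^ (a k.val) := Real.rpow_le_rpow_of_exponent_ge hω.1 hω.2.le hle
  have hinj : Function.Injective (fun q : Fin d × Fin 2 => (⟨f q, hmem q⟩ : S)) := by
    rintro ⟨k, i⟩ ⟨k', i'⟩ h
    simp only [Subtype.mk_eq_mk] at h
    have h1 := congrFun h k
    simp only [hf, if_true, eq_self_iff_true] at h1
    by_cases hkk : k = k'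
    · subst hkk
      simp only [if_true, eq_self_iff_true] at h1
      have : i = i' := Fin.ext (by omega)
      rw [this]
    · rw [if_neg hkk] at h1
      omega
  have hcount : (2 * d : ℕ) ≤ infoCount (akorobovLam ω a b) d ε := by
    have := Nat.card_le_card_of_injective _ hinj
    have h2 : Nat.card (Fin d × Fin 2) = 2 * d := by
      simp only [Nat.card_prod, Nat.card_eq_fintype_card, Fintype.card_prod, Fintype.card_fin]; ring
    rw [h2] at this
    exact this
  calc (2 * d : ℝ) = ((2 * d : ℕ) : ℝ) := by push_cast; ring
    _ ≤ (infoCount (akorobovLam ω a b) d ε : ℝ) := by exact_mod_cast hcount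
    _ ≤ C * ε ^ (-p) := hbound d hd ε hε

include hω ha0 hamono hbs hb in
lemma p_ne_zero {C : ℝ}
    (hbound : ∀ d : ℕ, 1 ≤ d → ∀ ε : ℝ, ε ∈ Set.Ioo (0 : ℝ) 1 →
      (infoCount (akorobovLam ω a b) d ε : ℝ) ≤ C * ε ^ (-(0 : ℝ))) : False := by
  obtain ⟨d₀, hd₀⟩ := exists_nat_gt (C / 2)
  set d := d₀ + 1 with hd
  set ε := ω ^ (a (d - 1)) with hε
  have hapos := ha_pos ha0 hamono (d - 1)
  have hεIoo : ε ∈ Set.Ioo (0 : ℝ) 1 :=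
    ⟨Real.rpow_pos_of_pos hω.1 _, Real.rpow_lt_one hω.1.le hω.2 hapos⟩
  have hsmall : ε ^ 2 < ω ^ (a (d - 1)) := by
    rw [hε, ← Real.rpow_natCast (ω ^ (a (d-1))) 2, ← Real.rpow_mul hω.1.le]
    apply Real.rpow_lt_rpow_of_exponent_gt hω.1 hω.2
    push_cast; linarith
  have := count_lower_step hω ha0 hamono hbs hb hbound d (by omega) hεIoo hsmall
  have h2 : C * ε ^ (-(0:ℝ)) = C := by norm_num
  rw [h2] at this
  have : (d : ℝ) ≤ C / 2 := by linarith
  have : (d₀ : ℝ) < (d : ℝ) := by rw [hd]; push_cast; linarith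
  linarith

include hω ha0 hamono hbs hb in
lemma liminf_lower {C p : ℝ} (hC : 0 ≤ C) (hp : 0 < p)
    (hbound : ∀ d : ℕ, 1 ≤ d → ∀ ε : ℝ, ε ∈ Set.Ioo (0 : ℝ) 1 →
      (infoCount (akorobovLam ω a b) d ε : ℝ) ≤ C * ε ^ (-p)) :
    (↑(2 / (p * (-Real.log ω))) : EReal) ≤
      Filter.liminf (fun k : ℕ => ((a k / Real.log ((k : ℝ) + 1) : ℝ) : EReal)) Filter.atTop := by
  set L : ℝ := -Real.log ω with hLdef
  have hL : 0 < L := by simp only [hLdef, neg_pos]; exact Real.log_neg hω.1 hω.2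
  set t : ℝ := 2 / (p * L) with htdef
  have ht : 0 < t := by positivity
  -- eventual lower bound on a k
  have hak : ∀ᶠ k : ℕ in atTop,
      t * Real.log (2 * ((k : ℝ) + 1) / (C + 1)) ≤ a k := by
    have hcast := tendsto_natCast_atTop_atTop (R := ℝ)
    filter_upwards [hcast.eventually_ge_atTop ((C + 1) / 2)] with k hk
    have hC1 : (0 : ℝ) < C + 1 := by linarith
    have hk1 : (0 : ℝ) < (k : ℝ) + 1 := by positivity
    have hbase_lt : (C + 1) / (2 * ((k : ℝ) + 1)) < 1 := by
      rw [div_lt_one (by positivity)]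
      linarith
    have hbase_pos : (0 : ℝ) < (C + 1) / (2 * ((k : ℝ) + 1)) := by positivity
    set β : ℝ := (C + 1) / (2 * ((k : ℝ) + 1)) with hβ
    set ε : ℝ := β ^ (1 / p) with hε
    have hεI : ε ∈ Set.Ioo (0 : ℝ) 1 :=
      ⟨Real.rpow_pos_of_pos hbase_pos _, Real.rpow_lt_one hbase_pos.le hbase_lt (by positivity)⟩
    have hεp : ε ^ (-p) = 2 * ((k : ℝ) + 1) / (C + 1) := by
      rw [hε, ← Real.rpow_mul hbase_pos.le]
      have h1 : 1 / p * (-p) = -1 := by field_simp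
      rw [h1, Real.rpow_neg_one, hβ, inv_div]
    -- cannot have ε² < ω^(a k)
    have hnot : ¬ ε ^ 2 < ω ^ (a k) := by
      intro hlt
      have hstep := count_lower_step hω ha0 hamono hbs hb hbound (k + 1) (by omega) hεI
        (by simpa using hlt)
      rw [hεp] at hstep
      have hlt2 : C * (2 * ((k : ℝ) + 1) / (C + 1)) < 2 * ((k : ℝ) + 1) := by
        rw [mul_div_assoc']
        rw [div_lt_iff₀ hC1]
        nlinarith
      push_cast at hstep
      linarith
    push_neg at hnot
    -- take logarithms
    have hω_eq : ω ^ (a k) = Real.exp (Real.log ω * a k) := Real.rpow_def_of_pos hω.1 _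
    have hε2 : ε ^ 2 = Real.exp (2 / p * Real.log β) := by
      rw [hε, ← Real.rpow_natCast (β ^ (1/p)) 2, ← Real.rpow_mul hbase_pos.le,
        Real.rpow_def_of_pos hbase_pos]
      norm_num
      ring_nf
    rw [hω_eq, hε2, Real.exp_le_exp] at hnot
    have hlogβ : Real.log β = -Real.log (2 * ((k : ℝ) + 1) / (C + 1)) := by
      rw [hβ, ← Real.log_inv]
      congr 1
      rw [inv_div]
    have hlogω : Real.log ω = -L := by rw [hLdef]; ring
    rw [hlogβ, hlogω] at hnot
    set D : ℝ := Real.log (2 * ((k : ℝ) + 1) / (C + 1))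
    -- hnot : -L * a k ≤ 2 / p * -D ; want t * D ≤ a k
    have h2 : p * (-L * a k) ≤ p * (2 / p * -D) := mul_le_mul_of_nonneg_left hnot hp.le
    have h3 : p * (2 / p * -D) = -2 * D := by field_simp
    have h4 : 2 * D ≤ p * L * a k := by
      have h23 := h2.trans_eq h3
      linarith [h23]
    have h6 : t * D * (p * L) = 2 * D := by rw [htdef]; field_simp
    have h7 : t * D * (p * L) ≤ a k * (p * L) := by rw [h6]; linarith [h4]
    exact le_of_mul_le_mul_right h7 (mul_pos hp hL)
  -- for each c < t : c ≤ liminf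
  have key : ∀ c : ℝ, c < t →
      (c : EReal) ≤ Filter.liminf
        (fun k : ℕ => ((a k / Real.log ((k : ℝ) + 1) : ℝ) : EReal)) Filter.atTop := by
    intro c hc
    apply Filter.le_liminf_of_le (by isBoundedDefault)
    have hC1 : (0 : ℝ) < C + 1 := by linarith
    set E : ℝ := Real.log (2 / (C + 1)) with hE
    have hlogtend : Tendsto (fun k : ℕ => Real.log ((k : ℝ) + 1)) atTop atTop :=
      Real.tendsto_log_atTop.comp
        (tendsto_atTop_add_const_right _ 1 (tendsto_natCast_atTop_atTop (R := ℝ)))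
    filter_upwards [hak, hlogtend.eventually_ge_atTop ((-(t * E)) / (t - c)),
      hlogtend.eventually_ge_atTop 1] with k h1 h2 h3
    have hk1 : (0 : ℝ) < (k : ℝ) + 1 := by positivity
    have hlogpos : (0 : ℝ) < Real.log ((k : ℝ) + 1) := lt_of_lt_of_le one_pos h3
    have hD : Real.log (2 * ((k : ℝ) + 1) / (C + 1))
        = Real.log ((k : ℝ) + 1) + E := by
      rw [hE, ← Real.log_mul (by positivity) (by positivity)]
      congr 1
      field_simp
    rw [hD] at h1
    have htc : 0 < t - c := by linarith
    have h4 : -(t * E) ≤ (t - c) * Real.log ((k : ℝ) + 1) := by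
      rw [div_le_iff₀ htc] at h2
      linarith [h2]
    have h5 : c * Real.log ((k : ℝ) + 1) ≤ a k := by nlinarith
    rw [EReal.coe_le_coe_iff, le_div_iff₀ hlogpos]
    exact h5
  -- conclude
  apply le_of_forall_lt
  intro c hclt
  obtain ⟨x, hcx, hxt⟩ := exists_between hclt
  have hxtop : x ≠ ⊤ := (hxt.trans_le le_top).ne
  have hxbot : x ≠ ⊥ := (bot_le.trans_lt hcx).ne'
  have hxr := EReal.coe_toReal hxtop hxbot
  calc c < x := hcx
    _ = (x.toReal : EReal) := hxr.symm
    _ ≤ _ := key x.toReal (by rw [← EReal.coe_lt_coe_iff] at *; rw [hxr]; exact hxt)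

end Lower

end AKorobovAux

/-- Analytic Korobov kernels: SPT iff `liminf a_k/ln k > 0`, and in that case the exponent
of SPT is `2/A_*` with `A_* = ln(ω⁻¹) · liminf a_k/ln k` (computed in `EReal`; when
`A_* = ∞`, `2/A_* = 0` via `EReal.toReal ⊤ = 0` and `2/0 = 0`). -/
theorem akorobov_spt (ω : ℝ) (hω : ω ∈ Set.Ioo (0 : ℝ) 1) (a b : ℕ → ℝ)
    (ha0 : 0 < a 0) (hamono : Monotone a)
    (hb : ∃ bstar : ℝ, 0 < bstar ∧ ∀ k, bstar ≤ b k) :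
    (IsSPT (akorobovLam ω a b) ↔
      0 < Filter.liminf (fun k : ℕ => (a k / Real.log ((k : ℝ) + 1) : EReal))
        Filter.atTop) ∧
    (0 < Filter.liminf (fun k : ℕ => (a k / Real.log ((k : ℝ) + 1) : EReal))
        Filter.atTop →
      sptExponent (akorobovLam ω a b) =
        2 / ((Real.log ω⁻¹ : EReal) *
          Filter.liminf (fun k : ℕ => (a k / Real.log ((k : ℝ) + 1) : EReal))
            Filter.atTop).toReal) := by
  obtain ⟨bstar, hbs, hb⟩ := hb
  have hL : 0 < -Real.log ω := by
    have := Real.log_neg hω.1 hω.2; linarith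
  have hLinv : Real.log ω⁻¹ = -Real.log ω := Real.log_inv ω
  have hlog0 : Real.log ω ≠ 0 := by intro h; rw [h] at hL; norm_num at hL
  simp only [← EReal.coe_div]
  set F : ℕ → EReal := fun k => ((a k / Real.log ((k : ℝ) + 1) : ℝ) : EReal) with hF
  set ℓ : EReal := Filter.liminf F Filter.atTop with hℓ
  -- generic membership helper
  have upper_mem : ∀ q α : ℝ, 0 < q → 0 < α → (α : EReal) < ℓ →
      1 < q / 2 * α * (-Real.log ω) →
      ∃ C : ℝ, 0 ≤ C ∧ ∀ d : ℕ, 1 ≤ d → ∀ ε : ℝ, ε ∈ Set.Ioo (0 : ℝ) 1 →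
        (infoCount (akorobovLam ω a b) d ε : ℝ) ≤ C * ε ^ (-q) := by
    intro q α hq hα hαℓ hr
    have hevE : ∀ᶠ k : ℕ in atTop, (α : EReal) < F k :=
      eventually_lt_of_lt_liminf hαℓ (by isBoundedDefault)
    have hev : ∀ᶠ k : ℕ in atTop, α * Real.log ((k : ℝ) + 1) ≤ a k := by
      filter_upwards [hevE, eventually_ge_atTop 1] with k hk hk1
      have hlogpos : 0 < Real.log ((k : ℝ) + 1) := by
        apply Real.log_pos
        have : (1 : ℝ) ≤ (k : ℝ) := by exact_mod_cast hk1
        linarith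
      rw [hF, EReal.coe_lt_coe_iff, lt_div_iff₀ hlogpos] at hk
      linarith
    obtain ⟨C, hC, hball⟩ := count_upper hω ha0 hamono hbs hb
      (by positivity : (0:ℝ) < q / 2) hα hr hev
    refine ⟨C, hC, fun d hd ε hε => ?_⟩
    have h := hball d hd ε hε
    rwa [show -(2 * (q / 2)) = -q by ring] at h
  refine ⟨⟨fun hspt => ?_, fun hpos => ?_⟩, fun hpos => ?_⟩
  · -- SPT → 0 < liminf
    obtain ⟨C, p, hC, hp0, hbd⟩ := hspt
    have hpne : p ≠ 0 := by
      rintro rfl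
      exact p_ne_zero hω ha0 hamono hbs hb hbd
    have hp : 0 < p := lt_of_le_of_ne hp0 (Ne.symm hpne)
    have hll := liminf_lower hω ha0 hamono hbs hb hC hp hbd
    calc (0 : EReal) < ((2 / (p * (-Real.log ω)) : ℝ) : EReal) := by
          rw [EReal.coe_pos]; positivity
      _ ≤ ℓ := hll
  · -- 0 < liminf → SPT
    obtain ⟨x, h0x, hxℓ⟩ := exists_between hpos
    have hxtop : x ≠ ⊤ := (hxℓ.trans_le le_top).ne
    have hxbot : x ≠ ⊥ := (bot_le.trans_lt h0x).ne'
    set α : ℝ := x.toReal with hαdef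
    have hxα : (α : EReal) = x := EReal.coe_toReal hxtop hxbot
    have hα : 0 < α := EReal.coe_pos.mp (hxα ▸ h0x)
    set q : ℝ := 2 / (α * (-Real.log ω)) + 2 with hqdef
    have hq : 0 < q := by positivity
    have hr : 1 < q / 2 * α * (-Real.log ω) := by
      have hαL : 0 < α * (-Real.log ω) := by positivity
      have : q / 2 * α * (-Real.log ω) = 1 + α * (-Real.log ω) := by
        have h1 : α ≠ 0 := ne_of_gt hα
        rw [hqdef]
        field_simp
        ring
      rw [this]; linarith
    obtain ⟨C, hC, hb'⟩ := upper_mem q α hq hα (hxα ▸ hxℓ) hr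
    exact ⟨C, q, hC, hq.le, hb'⟩
  · -- exponent formula
    rw [sptExponent]
    set P : Set ℝ := {p : ℝ | 0 ≤ p ∧ ∃ C : ℝ, 0 ≤ C ∧ ∀ d : ℕ, 1 ≤ d → ∀ ε : ℝ,
      ε ∈ Set.Ioo (0 : ℝ) 1 →
      (infoCount (akorobovLam ω a b) d ε : ℝ) ≤ C * ε ^ (-p)} with hP
    have hbdd : BddBelow P := ⟨0, fun p hp => hp.1⟩
    have hmem_lower : ∀ p ∈ P, (↑(2 / (p * (-Real.log ω))) : EReal) ≤ ℓ ∧ 0 < p := by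
      rintro p ⟨hp0, C, hC, hbd⟩
      have hpne : p ≠ 0 := by
        rintro rfl
        exact p_ne_zero hω ha0 hamono hbs hb hbd
      have hp : 0 < p := lt_of_le_of_ne hp0 (Ne.symm hpne)
      exact ⟨liminf_lower hω ha0 hamono hbs hb hC hp hbd, hp⟩
    by_cases hℓtop : ℓ = ⊤
    · have hmul : ((Real.log ω⁻¹ : ℝ) : EReal) * ℓ = ⊤ := by
        rw [hℓtop]
        exact EReal.coe_mul_top_of_pos (by rw [hLinv]; exact hL)
      rw [hmul, EReal.toReal_top, div_zero]
      have hmem : ∀ q : ℝ, 0 < q → q ∈ P := by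
        intro q hq
        set α : ℝ := 4 / (q * (-Real.log ω)) with hαdef
        have hα : 0 < α := by positivity
        have hr : 1 < q / 2 * α * (-Real.log ω) := by
          have : q / 2 * α * (-Real.log ω) = 2 := by
            have h1 : q ≠ 0 := ne_of_gt hq
            rw [hαdef]
            field_simp
            ring
          rw [this]; norm_num
        obtain ⟨C, hC, hb'⟩ := upper_mem q α hq hα (hℓtop ▸ EReal.coe_lt_top α) hr
        exact ⟨hq.le, C, hC, hb'⟩
      apply le_antisymm
      · apply le_of_forall_gt_imp_ge_of_dense
        intro q hq
        exact csInf_le hbdd (hmem q hq)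
      · apply le_csInf ⟨1, hmem 1 one_pos⟩
        exact fun p hp => hp.1
    · have hℓbot : ℓ ≠ ⊥ := (bot_le.trans_lt hpos).ne'
      set ℓR : ℝ := ℓ.toReal with hℓR
      have hℓeq : (ℓR : EReal) = ℓ := EReal.coe_toReal hℓtop hℓbot
      have hℓRpos : 0 < ℓR := EReal.coe_pos.mp (hℓeq ▸ hpos)
      have hRHS : (((Real.log ω⁻¹ : ℝ) : EReal) * ℓ).toReal = (-Real.log ω) * ℓR := by
        rw [← hℓeq, ← EReal.coe_mul, EReal.toReal_coe, hLinv]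
      rw [hRHS]
      set t : ℝ := 2 / (-Real.log ω * ℓR) with htdef
      have ht : 0 < t := by positivity
      apply le_antisymm
      · apply le_of_forall_gt_imp_ge_of_dense
        intro q hq
        have hq0 : 0 < q := ht.trans hq
        have h2q : 2 < q * (-Real.log ω) * ℓR := by
          rw [htdef, div_lt_iff₀ (by positivity)] at hq
          nlinarith
        have hlt : 2 / (q * (-Real.log ω)) < ℓR := by
          rw [div_lt_iff₀ (by positivity)]
          nlinarith
        set α : ℝ := (2 / (q * (-Real.log ω)) + ℓR) / 2 with hαdef
        have hα : 0 < α := by positivity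
        have hαlt : α < ℓR := by rw [hαdef]; linarith
        have hαgt : 2 / (q * (-Real.log ω)) < α := by rw [hαdef]; linarith
        have hr : 1 < q / 2 * α * (-Real.log ω) := by
          rw [div_lt_iff₀ (by positivity : (0:ℝ) < q * (-Real.log ω))] at hαgt
          nlinarith
        have hαℓ : (α : EReal) < ℓ := by
          rw [← hℓeq, EReal.coe_lt_coe_iff]
          exact hαlt
        obtain ⟨C, hC, hb'⟩ := upper_mem q α hq0 hα hαℓ hr
        exact csInf_le hbdd ⟨hq0.le, C, hC, hb'⟩
      · have hne : P.Nonempty := by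
          refine ⟨t + 1, ?_⟩
          have hq0 : 0 < t + 1 := by linarith
          have h2q : 2 < (t + 1) * (-Real.log ω) * ℓR := by
            have h1 : t * (-Real.log ω * ℓR) = 2 := by
              have h2 : ℓR ≠ 0 := ne_of_gt hℓRpos
              rw [htdef]
              field_simp
            nlinarith
          have hlt : 2 / ((t + 1) * (-Real.log ω)) < ℓR := by
            rw [div_lt_iff₀ (by positivity)]
            nlinarith
          set α : ℝ := (2 / ((t + 1) * (-Real.log ω)) + ℓR) / 2 with hαdef
          have hα : 0 < α := by positivity
          have hαgt : 2 / ((t + 1) * (-Real.log ω)) < α := by rw [hαdef]; linarith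
          have hr : 1 < (t + 1) / 2 * α * (-Real.log ω) := by
            rw [div_lt_iff₀ (by positivity : (0:ℝ) < (t + 1) * (-Real.log ω))] at hαgt
            nlinarith
          have hαℓ : (α : EReal) < ℓ := by
            rw [← hℓeq, EReal.coe_lt_coe_iff, hαdef]
            linarith
          obtain ⟨C, hC, hb'⟩ := upper_mem (t + 1) α hq0 hα hαℓ hr
          exact ⟨hq0.le, C, hC, hb'⟩
        apply le_csInf hne
        intro p hp
        obtain ⟨hll, hppos⟩ := hmem_lower p hp
        rw [← hℓeq, EReal.coe_le_coe_iff] at hll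
        have h2 : 2 ≤ p * (-Real.log ω) * ℓR := by
          rw [div_le_iff₀ (by positivity)] at hll
          nlinarith
        rw [htdef, div_le_iff₀ (by positivity)]
        nlinarith
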